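/- Let $d \ge 1$ and fix positive reals $h_1, \dots, h_d$ depending on $n$ through $h_i(n) = r_i 2^{-n}$ with fixed positive integers $r_i$; set $H_n = \prod_{i=1}^d h_i(n)$. For each $n$ let $u_n, v_n : \mathbb{Z}^d \to \mathbb{R}$ be finitely supported with $H_n \sum_k (u_{n,k})^2 \le c$ and $H_n \sum_k (v_{n,k})^2 \le c$ for a constant $c > 0$ independent of $n$, and let $\Phi_n u_n(x) = \sum_k u_{n,k} \prod_{i=1}^d \chi(x_i/h_i(n) - k_i)$ with $\chi(t) = \max(0,1-|t|)$. If for every $i$, $\lim_{n\to\infty} H_n \sum_k (u_{n,k+e_i} - u_{n,k})^2 = 0$, then $\lim_{n \to \infty} \Big( \int_{\mathbb{R}^d} \Phi_n v_n(x)\, \Phi_n u_n(x)\, dx \;-\; H_n \sum_{k} v_{n,k}\, u_{n,k} \Big) = 0$. -/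

import Mathlib

open BigOperators MeasureTheory Filter Function



noncomputable def chi (t : ℝ) : ℝ := max 0 (1 - |t|)

lemma chi_nonneg (t : ℝ) : 0 ≤ chi t := le_max_left _ _

lemma chi_continuous : Continuous chi := by
  unfold chi; fun_prop

lemma chi_eq_zero {t : ℝ} (h : 1 ≤ |t|) : chi t = 0 := max_eq_left (by linarith)

lemma chi_support_subset : support chi ⊆ Set.Ioc (-1) 1 := by
  intro t ht
  have h : |t| < 1 := by
    by_contra h
    exact ht (chi_eq_zero (not_lt.mp h))
  have h2 := abs_lt.mp h
  exact ⟨h2.1, h2.2.le⟩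

/-- pointwise partition identity -/
lemma chi_partition (t : ℝ) : chi t * (chi (t + 1) + chi t + chi (t - 1)) = chi t := by
  rcases le_or_gt 1 |t| with h | h
  · rw [chi_eq_zero h]; ring
  · have h1 := abs_lt.mp h
    have : chi (t + 1) + chi t + chi (t - 1) = 1 := by
      rcases le_total 0 t with ht | ht
      · have e1 : chi (t + 1) = 0 := chi_eq_zero (by rw [abs_of_nonneg (by linarith)]; linarith)
        have e2 : chi t = 1 - t := by rw [chi, abs_of_nonneg ht]; exact max_eq_right (by linarith)
        have e3 : chi (t - 1) = t := by
          rw [chi, abs_of_nonpos (by linarith)]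
          rw [max_eq_right (by linarith)]; ring
        rw [e1, e2, e3]; ring
      · have e1 : chi (t - 1) = 0 := chi_eq_zero (by rw [abs_of_nonpos (by linarith)]; linarith)
        have e2 : chi t = 1 + t := by
          rw [chi, abs_of_nonpos ht]; rw [max_eq_right (by linarith)]; ring
        have e3 : chi (t + 1) = -t := by
          rw [chi, abs_of_nonneg (by linarith)]
          rw [max_eq_right (by linarith)]; ring
        rw [e1, e2, e3]; ring
    rw [this, mul_one]

lemma integral_chi : ∫ t : ℝ, chi t = 1 := by
  rw [← intervalIntegral.integral_eq_integral_of_support_subset chi_support_subset]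
  rw [← intervalIntegral.integral_add_adjacent_intervals (a := (-1:ℝ)) (b := 0) (c := 1)
    (chi_continuous.intervalIntegrable _ _) (chi_continuous.intervalIntegrable _ _)]
  have h1 : ∫ t in (-1 : ℝ)..0, chi t = ∫ t in (-1 : ℝ)..0, (1 + t) := by
    apply intervalIntegral.integral_congr
    intro t ht
    rw [Set.uIcc_of_le (by norm_num)] at ht
    rw [chi, abs_of_nonpos ht.2, max_eq_right (by linarith [ht.1])]; ring
  have h2 : ∫ t in (0 : ℝ)..1, chi t = ∫ t in (0 : ℝ)..1, (1 - t) := by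
    apply intervalIntegral.integral_congr
    intro t ht
    rw [Set.uIcc_of_le (by norm_num)] at ht
    rw [chi, abs_of_nonneg ht.1, max_eq_right (by linarith [ht.2])]
  rw [h1, h2]
  have i1 : ∫ t in (-1 : ℝ)..0, (1 + t) = 1/2 := by
    rw [intervalIntegral.integral_add intervalIntegrable_const intervalIntegral.intervalIntegrable_id]
    simp
    norm_num
  have i2 : ∫ t in (0 : ℝ)..1, (1 - t) = 1/2 := by
    rw [intervalIntegral.integral_sub intervalIntegrable_const intervalIntegral.intervalIntegrable_id]
    simp
    norm_num
  rw [i1, i2]; norm_num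


noncomputable def aInt (m : ℤ) : ℝ := ∫ t : ℝ, chi t * chi (t - (m : ℝ))

lemma integrable_chi_mul (c : ℝ) : Integrable (fun t : ℝ => chi t * chi (t - c)) := by
  apply Continuous.integrable_of_hasCompactSupport
  · exact chi_continuous.mul (chi_continuous.comp (continuous_id.sub continuous_const))
  · apply HasCompactSupport.intro (isCompact_Icc (a := (-1:ℝ)) (b := 1))
    intro t ht
    have h1 : 1 ≤ |t| := by
      simp only [Set.mem_Icc, not_and_or, not_le] at ht
      rcases ht with h | h
      · rw [abs_of_neg (by linarith)]; linarith
      · rw [abs_of_pos (by linarith)]; linarith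
    rw [chi_eq_zero h1, zero_mul]

lemma aInt_nonneg (m : ℤ) : 0 ≤ aInt m :=
  integral_nonneg fun t => mul_nonneg (chi_nonneg t) (chi_nonneg _)

lemma aInt_eq_zero {m : ℤ} (h : 2 ≤ |m|) : aInt m = 0 := by
  have : (fun t : ℝ => chi t * chi (t - (m : ℝ))) = fun _ => (0 : ℝ) := by
    funext t
    rcases lt_or_ge |t| 1 with h1 | h1
    · have h2 : (2 : ℝ) ≤ |(m : ℝ)| := by
        rw [← Int.cast_abs]; exact_mod_cast h
      have h3 : 1 ≤ |t - (m : ℝ)| := by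
        have := abs_sub_abs_le_abs_sub (m : ℝ) t
        rw [abs_sub_comm] at this
        linarith
      rw [chi_eq_zero h3, mul_zero]
    · rw [chi_eq_zero h1, zero_mul]
  rw [aInt, this, integral_zero]

lemma aInt_sum : aInt (-1) + aInt 0 + aInt 1 = 1 := by
  have e1 : aInt (-1) = ∫ t : ℝ, chi t * chi (t + 1) := by
    rw [aInt]; norm_num
  have e2 : aInt 0 = ∫ t : ℝ, chi t * chi t := by rw [aInt]; norm_num
  have e3 : aInt 1 = ∫ t : ℝ, chi t * chi (t - 1) := by rw [aInt]; norm_num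
  rw [e1, e2, e3]
  have i1 := integrable_chi_mul (-1)
  have i0 := integrable_chi_mul 0
  have ip1 := integrable_chi_mul 1
  simp only [sub_neg_eq_add, sub_zero] at i1 i0
  have hfun : (fun t : ℝ => chi t * chi (t + 1) + chi t * chi t + chi t * chi (t - 1)) = chi := by
    funext t
    linear_combination chi_partition t
  have i10 : Integrable (fun t : ℝ => chi t * chi (t + 1) + chi t * chi t) volume := i1.add i0
  rw [← integral_add i1 i0, ← integral_add i10 ip1, hfun, integral_chi]

lemma aInt_sum_finset : ∑ σ ∈ ({-1, 0, 1} : Finset ℤ), aInt σ = 1 := by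
  rw [show ({-1, 0, 1} : Finset ℤ) = {-1, 0, 1} from rfl]
  rw [Finset.sum_insert (by decide), Finset.sum_insert (by decide), Finset.sum_singleton]
  linarith [aInt_sum]


lemma sum_sq_le_finsum_sq {α : Type*} (f : α → ℝ) (hf : (support f).Finite) (s : Finset α) :
    ∑ k ∈ s, f k ^ 2 ≤ ∑ᶠ k, f k ^ 2 := by
  classical
  have hsub : support (fun k => f k ^ 2) ⊆ ↑(s ∪ hf.toFinset) := by
    intro k hk
    have : f k ≠ 0 := fun h => by simp [h] at hk
    simp [Finset.mem_union, hf.mem_toFinset, this]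
  rw [finsum_eq_sum_of_support_subset _ hsub]
  exact Finset.sum_le_sum_of_subset_of_nonneg Finset.subset_union_left
    (fun _ _ _ => sq_nonneg _)

lemma finsum_sq_eq_sum {α : Type*} (f : α → ℝ) {s : Finset α} (hsub : support f ⊆ ↑s) :
    ∑ᶠ k, f k ^ 2 = ∑ k ∈ s, f k ^ 2 := by
  apply finsum_eq_sum_of_support_subset
  intro k hk
  exact hsub (fun h => by simp [h] at hk)

lemma abs_sum_mul_le {α : Type*} (s : Finset α) (f g : α → ℝ)
    (hf : (support f).Finite) (hg : (support g).Finite) :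
    |∑ k ∈ s, f k * g k| ≤ Real.sqrt (∑ᶠ k, f k ^ 2) * Real.sqrt (∑ᶠ k, g k ^ 2) := by
  have h := Finset.sum_mul_sq_le_sq_mul_sq s f g
  have h1 := sum_sq_le_finsum_sq f hf s
  have h2 := sum_sq_le_finsum_sq g hg s
  have hfn : (0:ℝ) ≤ ∑ᶠ k, f k ^ 2 := finsum_nonneg fun k => sq_nonneg _
  have hgn : (0:ℝ) ≤ ∑ᶠ k, g k ^ 2 := finsum_nonneg fun k => sq_nonneg _
  calc |∑ k ∈ s, f k * g k| = Real.sqrt ((∑ k ∈ s, f k * g k) ^ 2) :=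
        (Real.sqrt_sq_eq_abs _).symm
    _ ≤ Real.sqrt ((∑ᶠ k, f k ^ 2) * (∑ᶠ k, g k ^ 2)) := by
        apply Real.sqrt_le_sqrt
        refine h.trans (mul_le_mul h1 h2 ?_ hfn)
        exact Finset.sum_nonneg fun _ _ => sq_nonneg _
    _ = _ := Real.sqrt_mul hfn _

lemma sqrt_finsum_sq_add {α : Type*} (f g : α → ℝ)
    (hf : (support f).Finite) (hg : (support g).Finite) :
    Real.sqrt (∑ᶠ k, (f k + g k) ^ 2) ≤
      Real.sqrt (∑ᶠ k, f k ^ 2) + Real.sqrt (∑ᶠ k, g k ^ 2) := by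
  classical
  set s : Finset α := hf.toFinset ∪ hg.toFinset with hs
  have hsubf : support f ⊆ ↑s := by
    intro k hk; simp [hs, hf.mem_toFinset, hk]
  have hsubg : support g ⊆ ↑s := by
    intro k hk; simp [hs, hg.mem_toFinset, hk]
  have hsubfg : support (fun k => f k + g k) ⊆ ↑s := by
    intro k hk
    by_contra hns
    have h1 : f k = 0 := by by_contra h; exact hns (hsubf h)
    have h2 : g k = 0 := by by_contra h; exact hns (hsubg h)
    exact hk (by simp [h1, h2])
  rw [finsum_sq_eq_sum _ hsubfg, finsum_sq_eq_sum f hsubf, finsum_sq_eq_sum g hsubg]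
  set A := ∑ k ∈ s, f k ^ 2 with hA
  set B := ∑ k ∈ s, g k ^ 2 with hB
  have hA0 : 0 ≤ A := Finset.sum_nonneg fun _ _ => sq_nonneg _
  have hB0 : 0 ≤ B := Finset.sum_nonneg fun _ _ => sq_nonneg _
  have hCS : ∑ k ∈ s, f k * g k ≤ Real.sqrt A * Real.sqrt B := by
    refine le_trans (le_abs_self _) ?_
    calc |∑ k ∈ s, f k * g k| = Real.sqrt ((∑ k ∈ s, f k * g k) ^ 2) :=
          (Real.sqrt_sq_eq_abs _).symm
      _ ≤ Real.sqrt (A * B) := Real.sqrt_le_sqrt (Finset.sum_mul_sq_le_sq_mul_sq s f g)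
      _ = _ := Real.sqrt_mul hA0 _
  have hexp : ∑ k ∈ s, (f k + g k) ^ 2 = A + 2 * (∑ k ∈ s, f k * g k) + B := by
    rw [hA, hB, Finset.mul_sum, ← Finset.sum_add_distrib, ← Finset.sum_add_distrib]
    exact Finset.sum_congr rfl fun k _ => by ring
  have hle : ∑ k ∈ s, (f k + g k) ^ 2 ≤ (Real.sqrt A + Real.sqrt B) ^ 2 := by
    rw [hexp]
    nlinarith [Real.sq_sqrt hA0, Real.sq_sqrt hB0, Real.sqrt_nonneg A, Real.sqrt_nonneg B]
  calc Real.sqrt (∑ k ∈ s, (f k + g k) ^ 2) ≤ Real.sqrt ((Real.sqrt A + Real.sqrt B) ^ 2) :=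
        Real.sqrt_le_sqrt hle
    _ = Real.sqrt A + Real.sqrt B :=
        Real.sqrt_sq (by positivity)

lemma support_sum_finite {α β : Type*} (s : Finset β) (G : β → α → ℝ)
    (hG : ∀ j, (support (G j)).Finite) :
    (support (fun k => ∑ j ∈ s, G j k)).Finite := by
  apply Set.Finite.subset (Set.Finite.biUnion s.finite_toSet (fun j _ => hG j))
  intro k hk
  obtain ⟨j, hj, hne⟩ := Finset.exists_ne_zero_of_sum_ne_zero hk
  exact Set.mem_biUnion hj hne

lemma sqrt_finsum_sq_sum_le {α β : Type*} (s : Finset β) (G : β → α → ℝ)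
    (hG : ∀ j, (support (G j)).Finite) :
    Real.sqrt (∑ᶠ k, (∑ j ∈ s, G j k) ^ 2) ≤ ∑ j ∈ s, Real.sqrt (∑ᶠ k, (G j k) ^ 2) := by
  classical
  induction s using Finset.induction with
  | empty => simp
  | @insert b t hb ih =>
      have e1 : ∀ k, ∑ j ∈ insert b t, G j k = G b k + ∑ j ∈ t, G j k := fun k =>
        Finset.sum_insert hb
      simp only [e1, Finset.sum_insert hb]
      exact (sqrt_finsum_sq_add _ _ (hG b) (support_sum_finite t G hG)).trans
        (add_le_add (le_refl _) ih)

lemma finsum_sq_translate {α : Type*} [AddGroup α] (f : α → ℝ) (t : α) :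
    ∑ᶠ k, (f (k + t)) ^ 2 = ∑ᶠ k, f k ^ 2 :=
  finsum_comp_equiv (Equiv.addRight t) (f := fun k => f k ^ 2)


lemma support_shift_sub_finite {d : ℕ} (u : (Fin d → ℤ) → ℝ) (hu : (support u).Finite)
    (t t' : Fin d → ℤ) :
    (support (fun k => u (k + t) - u (k + t'))).Finite := by
  have h1 : (support (fun k : Fin d → ℤ => u (k + t))).Finite :=
    hu.preimage (Set.injOn_of_injective (add_left_injective t))
  have h2 : (support (fun k : Fin d → ℤ => u (k + t'))).Finite :=
    hu.preimage (Set.injOn_of_injective (add_left_injective t'))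
  apply Set.Finite.subset (h1.union h2)
  intro k hk
  by_contra hns
  simp only [Set.mem_union, mem_support, not_or, not_not] at hns
  exact hk (by simp [hns.1, hns.2] : u (k + t) - u (k + t') = 0)

lemma key_shift_bound {d : ℕ} (u : (Fin d → ℤ) → ℝ) (hu : (support u).Finite)
    (m : Fin d → ℤ) (hm : ∀ i, |m i| ≤ 1) :
    Real.sqrt (∑ᶠ k, (u (k + m) - u k) ^ 2) ≤
      ∑ i : Fin d, Real.sqrt (∑ᶠ k, (u (k + Pi.single i 1) - u k) ^ 2) := by
  classical
  set q : ℕ → (Fin d → ℤ) := fun j i => if (i : ℕ) < j then m i else 0 with hq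
  have hq0 : q 0 = 0 := by funext i; simp [hq]
  have hqd : q d = m := by funext i; simp [hq, i.isLt]
  set G : ℕ → (Fin d → ℤ) → ℝ := fun j k => u (k + q (j + 1)) - u (k + q j) with hG
  have hGfin : ∀ j, (support (G j)).Finite := fun j =>
    support_shift_sub_finite u hu _ _
  have htel : ∀ k, u (k + m) - u k = ∑ j ∈ Finset.range d, G j k := by
    intro k
    rw [Finset.sum_range_sub (fun j => u (k + q j))]
    rw [hq0, hqd, add_zero]
  have step1 : Real.sqrt (∑ᶠ k, (u (k + m) - u k) ^ 2) ≤
      ∑ j ∈ Finset.range d, Real.sqrt (∑ᶠ k, (G j k) ^ 2) := by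
    have : (fun k : Fin d → ℤ => u (k + m) - u k) = fun k => ∑ j ∈ Finset.range d, G j k :=
      funext htel
    rw [show (∑ᶠ k, (u (k + m) - u k) ^ 2) = ∑ᶠ k, (∑ j ∈ Finset.range d, G j k) ^ 2 by
      exact finsum_congr fun k => by rw [htel k]]
    exact sqrt_finsum_sq_sum_le _ _ hGfin
  refine step1.trans ?_
  -- convert range-d sum to Fin d sum with per-term bound
  set B : ℕ → ℝ := fun j =>
    if hj : j < d then Real.sqrt (∑ᶠ k, (u (k + Pi.single (⟨j, hj⟩ : Fin d) 1) - u k) ^ 2)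
    else 0 with hB
  have hstep2 : ∀ j ∈ Finset.range d, Real.sqrt (∑ᶠ k, (G j k) ^ 2) ≤ B j := by
    intro j hj
    rw [Finset.mem_range] at hj
    set i : Fin d := ⟨j, hj⟩ with hi
    have hqsucc : q (j + 1) = q j + Pi.single i (m i) := by
      funext i'
      simp only [hq, Pi.add_apply, Pi.single_apply]
      rcases lt_trichotomy (i' : ℕ) j with h | h | h
      · rw [if_pos (by omega), if_pos h, if_neg (by simp [Fin.ext_iff, hi]; omega), add_zero]
      · have : i' = i := by simp [Fin.ext_iff, hi, h]
        rw [if_pos (by omega), if_neg (by omega), if_pos this, this, zero_add]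
      · rw [if_neg (by omega), if_neg (by omega), if_neg (by simp [Fin.ext_iff, hi]; omega),
          add_zero]
    have hGj : ∀ k, G j k = u ((k + q j) + Pi.single i (m i)) - u (k + q j) := by
      intro k
      simp only [hG, hqsucc]
      rw [add_assoc]
    have htrans : ∑ᶠ k, (G j k) ^ 2 =
        ∑ᶠ k, (u (k + Pi.single i (m i)) - u k) ^ 2 := by
      rw [show (∑ᶠ k, (G j k)^2) =
          ∑ᶠ k, ((fun k' => u (k' + Pi.single i (m i)) - u k') (k + q j)) ^ 2 from
        finsum_congr fun k => by rw [hGj k]]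
      exact finsum_sq_translate (fun k' => u (k' + Pi.single i (m i)) - u k') (q j)
    have hBj : B j = Real.sqrt (∑ᶠ k, (u (k + Pi.single i 1) - u k) ^ 2) := by
      simp only [hB, dif_pos hj, hi]
    rw [htrans, hBj]
    obtain ⟨hlo, hhi⟩ := abs_le.mp (hm i)
    interval_cases hmi' : m i
    · -- m i = -1
      have : ∑ᶠ k, (u (k + Pi.single i (-1 : ℤ)) - u k) ^ 2 =
          ∑ᶠ k, (u (k + Pi.single i 1) - u k) ^ 2 := by
        have hrw : ∀ k : Fin d → ℤ, (u (k + Pi.single i (-1 : ℤ)) - u k) ^ 2 =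
            ((fun k' => u (k' + Pi.single i 1) - u k') (k + Pi.single i (-1 : ℤ))) ^ 2 := by
          intro k
          have : k + Pi.single i (-1 : ℤ) + Pi.single i 1 = k := by
            funext i'
            simp [Pi.single_apply]
            split <;> ring
          show (u (k + Pi.single i (-1 : ℤ)) - u k) ^ 2 =
            (u ((k + Pi.single i (-1 : ℤ)) + Pi.single i 1) - u (k + Pi.single i (-1 : ℤ))) ^ 2
          rw [this]
          ring
        rw [finsum_congr hrw]
        exact finsum_sq_translate (fun k' => u (k' + Pi.single i 1) - u k') (Pi.single i (-1))
      rw [this]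
    · -- m i = 0
      simp
    · -- m i = 1
      exact le_refl _
  refine (Finset.sum_le_sum hstep2).trans ?_
  rw [← Fin.sum_univ_eq_sum_range B d]
  apply le_of_eq
  apply Finset.sum_congr rfl
  intro i _
  simp only [hB, dif_pos i.isLt]


lemma one_dim_integral (h : ℝ) (hp : 0 < h) (k l : ℤ) :
    ∫ t : ℝ, chi (t / h - (k : ℝ)) * chi (t / h - (l : ℝ)) = h * aInt (l - k) := by
  have e1 : (fun t : ℝ => chi (t / h - (k : ℝ)) * chi (t / h - (l : ℝ)))
      = fun t => (fun y => chi (y - (k : ℝ)) * chi (y - (l : ℝ))) (t * h⁻¹) := by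
    funext t; rw [div_eq_mul_inv]
  rw [e1, MeasureTheory.Measure.integral_comp_mul_right (fun y => chi (y - (k : ℝ)) * chi (y - (l : ℝ))) h⁻¹,
    inv_inv, abs_of_pos hp, smul_eq_mul]
  congr 1
  have e2 : (fun y : ℝ => chi (y - (k : ℝ)) * chi (y - (l : ℝ)))
      = fun y => (fun z => chi z * chi (z - ((l - k : ℤ) : ℝ))) (y - (k : ℝ)) := by
    funext y
    have : y - (k : ℝ) - ((l - k : ℤ) : ℝ) = y - (l : ℝ) := by push_cast; ring
    simp only [this]
  rw [e2, integral_sub_right_eq_self (fun z => chi z * chi (z - ((l - k : ℤ) : ℝ))) (k : ℝ)]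
  rfl

section
variable {d : ℕ} (h : Fin d → ℝ)

noncomputable def psi (h : Fin d → ℝ) (k : Fin d → ℤ) (x : Fin d → ℝ) : ℝ :=
  ∏ i, chi (x i / h i - (k i : ℝ))

lemma psi_continuous (k : Fin d → ℤ) : Continuous (psi h k) := by
  apply continuous_finset_prod
  intro i _
  exact chi_continuous.comp (((continuous_apply i).div_const _).sub continuous_const)

lemma psi_hcs (hp : ∀ i, 0 < h i) (k : Fin d → ℤ) : HasCompactSupport (psi h k) := by
  apply HasCompactSupport.intro
    (isCompact_univ_pi (fun i => isCompact_Icc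
      (a := h i * ((k i : ℝ) - 1)) (b := h i * ((k i : ℝ) + 1))))
  intro x hx
  rw [Set.mem_univ_pi] at hx
  push_neg at hx
  obtain ⟨i, hi⟩ := hx
  rw [Set.mem_Icc, not_and_or, not_le, not_le] at hi
  have hzero : chi (x i / h i - (k i : ℝ)) = 0 := by
    apply chi_eq_zero
    rcases hi with hi | hi
    · have : x i / h i < (k i : ℝ) - 1 := (div_lt_iff₀ (hp i)).mpr (by linarith [hi])
      rw [le_abs]; right; linarith
    · have : (k i : ℝ) + 1 < x i / h i := (lt_div_iff₀ (hp i)).mpr (by linarith [hi])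
      rw [le_abs]; left; linarith
  exact Finset.prod_eq_zero (Finset.mem_univ i) hzero

lemma integral_psi_mul (hp : ∀ i, 0 < h i) (k l : Fin d → ℤ) :
    ∫ x : Fin d → ℝ, psi h k x * psi h l x
      = (∏ i, h i) * ∏ i, aInt (l i - k i) := by
  have e1 : (fun x : Fin d → ℝ => psi h k x * psi h l x)
      = fun x => ∏ i, (fun (i : Fin d) (t : ℝ) =>
          chi (t / h i - (k i : ℝ)) * chi (t / h i - (l i : ℝ))) i (x i) := by
    funext x
    rw [psi, psi, ← Finset.prod_mul_distrib]
  have fub := MeasureTheory.integral_fintype_prod_eq_prod (ι := Fin d) (E := fun _ => ℝ) (μ := fun _ => volume)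
    (f := fun (i : Fin d) (t : ℝ) => chi (t / h i - (k i : ℝ)) * chi (t / h i - (l i : ℝ)))
  rw [e1]; refine Eq.trans fub ?_
  rw [← Finset.prod_mul_distrib]
  exact Finset.prod_congr rfl fun i _ => one_dim_integral (h i) (hp i) (k i) (l i)

lemma integrable_psi_mul (hp : ∀ i, 0 < h i) (k l : Fin d → ℤ) :
    Integrable (fun x : Fin d → ℝ => psi h k x * psi h l x) :=
  ((psi_continuous h k).mul (psi_continuous h l)).integrable_of_hasCompactSupport
    ((psi_hcs h hp k).mul_right)

end


lemma main_bound {d : ℕ} (h : Fin d → ℝ) (hp : ∀ i, 0 < h i)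
    (u v : (Fin d → ℤ) → ℝ) (hu : (support u).Finite) (hv : (support v).Finite) :
    |(∫ x : Fin d → ℝ,
        (∑ᶠ k : Fin d → ℤ, v k * ∏ i, chi (x i / h i - (k i : ℝ))) *
        (∑ᶠ k : Fin d → ℤ, u k * ∏ i, chi (x i / h i - (k i : ℝ))))
      - (∏ i, h i) * ∑ᶠ k : Fin d → ℤ, v k * u k|
    ≤ ∑ i : Fin d, Real.sqrt ((∏ j, h j) * ∑ᶠ k : Fin d → ℤ, (v k) ^ 2) *
        Real.sqrt ((∏ j, h j) * ∑ᶠ k : Fin d → ℤ, (u (k + Pi.single i 1) - u k) ^ 2) := by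
  classical
  set P : ℝ := ∏ i, h i with hPdef
  have hP0 : 0 < P := Finset.prod_pos fun i _ => hp i
  set sv : Finset (Fin d → ℤ) := hv.toFinset with hsv
  set su : Finset (Fin d → ℤ) := hu.toFinset with hsu
  set M : Finset (Fin d → ℤ) := Fintype.piFinset (fun _ => ({-1, 0, 1} : Finset ℤ)) with hM
  set w : (Fin d → ℤ) → ℝ := fun m => ∏ i, aInt (m i) with hw
  have hMmem : ∀ m ∈ M, ∀ i, |m i| ≤ 1 := by
    intro m hm i
    rw [hM, Fintype.mem_piFinset] at hm
    have := hm i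
    simp only [Finset.mem_insert, Finset.mem_singleton] at this
    rcases this with h1 | h1 | h1 <;> rw [h1] <;> norm_num
  have hw0 : ∀ m, 0 ≤ w m := fun m => Finset.prod_nonneg fun i _ => aInt_nonneg _
  have hwsum : ∑ m ∈ M, w m = 1 := by
    rw [hM, hw, ← Finset.prod_univ_sum]
    rw [Finset.prod_congr rfl (fun (i : Fin d) _ => aInt_sum_finset), Finset.prod_const_one]
  -- Step A: integral identity
  have hptwise : ∀ x : Fin d → ℝ,
      (∑ᶠ k : Fin d → ℤ, v k * ∏ i, chi (x i / h i - (k i : ℝ))) *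
      (∑ᶠ k : Fin d → ℤ, u k * ∏ i, chi (x i / h i - (k i : ℝ)))
      = ∑ k ∈ sv, ∑ l ∈ su, (v k * u l) * (psi h k x * psi h l x) := by
    intro x
    have hs1 : (support fun k : Fin d → ℤ => v k * ∏ i, chi (x i / h i - (k i : ℝ))) ⊆ ↑sv := by
      intro k hk
      rw [hsv, Set.Finite.coe_toFinset]
      intro hvk
      exact hk (by simp [hvk])
    have hs2 : (support fun k : Fin d → ℤ => u k * ∏ i, chi (x i / h i - (k i : ℝ))) ⊆ ↑su := by
      intro k hk
      rw [hsu, Set.Finite.coe_toFinset]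
      intro huk
      exact hk (by simp [huk])
    rw [finsum_eq_sum_of_support_subset _ hs1, finsum_eq_sum_of_support_subset _ hs2,
      Finset.sum_mul_sum]
    apply Finset.sum_congr rfl
    intro k _
    apply Finset.sum_congr rfl
    intro l _
    show (v k * ∏ i, chi (x i / h i - (k i : ℝ))) * (u l * ∏ i, chi (x i / h i - (l i : ℝ)))
      = (v k * u l) * (psi h k x * psi h l x)
    rw [psi, psi]; ring
  have hI : (∫ x : Fin d → ℝ,
      (∑ᶠ k : Fin d → ℤ, v k * ∏ i, chi (x i / h i - (k i : ℝ))) *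
      (∑ᶠ k : Fin d → ℤ, u k * ∏ i, chi (x i / h i - (k i : ℝ))))
      = ∑ k ∈ sv, ∑ l ∈ su, (v k * u l) * (P * ∏ i, aInt (l i - k i)) := by
    rw [show (fun x : Fin d → ℝ =>
        (∑ᶠ k : Fin d → ℤ, v k * ∏ i, chi (x i / h i - (k i : ℝ))) *
        (∑ᶠ k : Fin d → ℤ, u k * ∏ i, chi (x i / h i - (k i : ℝ))))
      = fun x => ∑ k ∈ sv, ∑ l ∈ su, (v k * u l) * (psi h k x * psi h l x)
      from funext hptwise]
    rw [integral_finset_sum sv (fun k _ => integrable_finset_sum su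
      (fun l _ => ((integrable_psi_mul h hp k l).const_mul (v k * u l))))]
    apply Finset.sum_congr rfl
    intro k _
    rw [integral_finset_sum su (fun l _ => ((integrable_psi_mul h hp k l).const_mul (v k * u l)))]
    apply Finset.sum_congr rfl
    intro l _
    rw [MeasureTheory.integral_const_mul, integral_psi_mul h hp k l]
  -- Step B: inner reindexing
  have hinner : ∀ k : Fin d → ℤ,
      ∑ l ∈ su, u l * ∏ i, aInt (l i - k i) = ∑ m ∈ M, w m * u (k + m) := by
    intro k
    set Mk : Finset (Fin d → ℤ) := M.map (addLeftEmbedding k) with hMk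
    have h1 : ∑ l ∈ su, u l * ∏ i, aInt (l i - k i)
        = ∑ l ∈ su ∪ Mk, u l * ∏ i, aInt (l i - k i) := by
      apply Finset.sum_subset Finset.subset_union_left
      intro l _ hl
      have : u l = 0 := by
        by_contra hne
        exact hl (by rw [hsu, Set.Finite.mem_toFinset]; exact hne)
      rw [this, zero_mul]
    have h2 : ∑ l ∈ su ∪ Mk, u l * ∏ i, aInt (l i - k i)
        = ∑ l ∈ Mk, u l * ∏ i, aInt (l i - k i) := by
      symm
      apply Finset.sum_subset Finset.subset_union_right
      intro l _ hl
      have hex : ∃ i, (l i - k i) ∉ ({-1, 0, 1} : Finset ℤ) := by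
        by_contra hc
        push_neg at hc
        apply hl
        rw [hMk, Finset.mem_map]
        refine ⟨l - k, ?_, ?_⟩
        · rw [hM, Fintype.mem_piFinset]; intro i; exact hc i
        · show k + (l - k) = l
          abel
      obtain ⟨i, hi⟩ := hex
      have ha : aInt (l i - k i) = 0 := by
        apply aInt_eq_zero
        simp only [Finset.mem_insert, Finset.mem_singleton, not_or] at hi
        obtain ⟨h1, h2, h3⟩ := hi
        rcases le_or_gt 0 (l i - k i) with hle | hlt
        · rw [abs_of_nonneg hle]; omega
        · rw [abs_of_neg hlt]; omega
      rw [Finset.prod_eq_zero (Finset.mem_univ i) ha, mul_zero]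
    rw [h1, h2, hMk, Finset.sum_map]
    apply Finset.sum_congr rfl
    intro m _
    show u (k + m) * ∏ i, aInt ((k + m) i - k i) = w m * u (k + m)
    have : ∏ i, aInt ((k + m) i - k i) = w m := by
      rw [hw]
      apply Finset.prod_congr rfl
      intro i _
      congr 1
      simp
    rw [this, mul_comm]
  -- Step C: rearranged identity
  have hI2 : (∫ x : Fin d → ℝ,
      (∑ᶠ k : Fin d → ℤ, v k * ∏ i, chi (x i / h i - (k i : ℝ))) *
      (∑ᶠ k : Fin d → ℤ, u k * ∏ i, chi (x i / h i - (k i : ℝ))))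
      = P * ∑ m ∈ M, w m * ∑ k ∈ sv, v k * u (k + m) := by
    rw [hI]
    have step : ∀ k ∈ sv, ∑ l ∈ su, (v k * u l) * (P * ∏ i, aInt (l i - k i))
        = ∑ m ∈ M, P * (w m * (v k * u (k + m))) := by
      intro k _
      calc ∑ l ∈ su, (v k * u l) * (P * ∏ i, aInt (l i - k i))
          = (v k * P) * ∑ l ∈ su, u l * ∏ i, aInt (l i - k i) := by
            rw [Finset.mul_sum]
            exact Finset.sum_congr rfl fun l _ => by ring
        _ = (v k * P) * ∑ m ∈ M, w m * u (k + m) := by rw [hinner k]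
        _ = ∑ m ∈ M, P * (w m * (v k * u (k + m))) := by
            rw [Finset.mul_sum]
            exact Finset.sum_congr rfl fun m _ => by ring
    rw [Finset.sum_congr rfl step, Finset.sum_comm, Finset.mul_sum]
    apply Finset.sum_congr rfl
    intro m _
    rw [Finset.mul_sum, Finset.mul_sum]
  -- pairing term
  have hpair : P * ∑ᶠ k : Fin d → ℤ, v k * u k
      = P * ∑ m ∈ M, w m * ∑ k ∈ sv, v k * u k := by
    have hsub : (support fun k : Fin d → ℤ => v k * u k) ⊆ ↑sv := by
      intro k hk
      rw [hsv, Set.Finite.coe_toFinset]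
      intro hvk
      exact hk (by simp [hvk])
    rw [finsum_eq_sum_of_support_subset _ hsub, ← Finset.sum_mul, hwsum, one_mul]
  -- difference
  have hdiff : (∫ x : Fin d → ℝ,
      (∑ᶠ k : Fin d → ℤ, v k * ∏ i, chi (x i / h i - (k i : ℝ))) *
      (∑ᶠ k : Fin d → ℤ, u k * ∏ i, chi (x i / h i - (k i : ℝ))))
      - P * ∑ᶠ k : Fin d → ℤ, v k * u k
      = P * ∑ m ∈ M, w m * ∑ k ∈ sv, v k * (u (k + m) - u k) := by
    rw [hI2, hpair, ← mul_sub, ← Finset.sum_sub_distrib]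
    congr 1
    apply Finset.sum_congr rfl
    intro m _
    rw [← mul_sub, ← Finset.sum_sub_distrib]
    congr 1
    exact Finset.sum_congr rfl fun k _ => by ring
  rw [hdiff]
  -- bound
  set X : ℝ := Real.sqrt (∑ᶠ k : Fin d → ℤ, (v k) ^ 2) *
    ∑ i : Fin d, Real.sqrt (∑ᶠ k : Fin d → ℤ, (u (k + Pi.single i 1) - u k) ^ 2) with hX
  have hbm : ∀ m ∈ M, |∑ k ∈ sv, v k * (u (k + m) - u k)| ≤ X := by
    intro m hm
    have hΔfin : (support fun k : Fin d → ℤ => u (k + m) - u k).Finite := by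
      have := support_shift_sub_finite u hu m 0
      simpa using this
    refine (abs_sum_mul_le sv v _ hv hΔfin).trans ?_
    rw [hX]
    exact mul_le_mul_of_nonneg_left (key_shift_bound u hu m (hMmem m hm)) (Real.sqrt_nonneg _)
  have hXnn : 0 ≤ X := by
    rw [hX]
    apply mul_nonneg (Real.sqrt_nonneg _)
    exact Finset.sum_nonneg fun i _ => Real.sqrt_nonneg _
  have habs : |P * ∑ m ∈ M, w m * ∑ k ∈ sv, v k * (u (k + m) - u k)| ≤ P * X := by
    rw [abs_mul, abs_of_pos hP0]
    apply mul_le_mul_of_nonneg_left _ hP0.le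
    calc |∑ m ∈ M, w m * ∑ k ∈ sv, v k * (u (k + m) - u k)|
        ≤ ∑ m ∈ M, |w m * ∑ k ∈ sv, v k * (u (k + m) - u k)| := Finset.abs_sum_le_sum_abs _ _
      _ ≤ ∑ m ∈ M, w m * X := by
          apply Finset.sum_le_sum
          intro m hm
          rw [abs_mul, abs_of_nonneg (hw0 m)]
          exact mul_le_mul_of_nonneg_left (hbm m hm) (hw0 m)
      _ = X := by rw [← Finset.sum_mul, hwsum, one_mul]
  refine habs.trans (le_of_eq ?_)
  rw [hX, Finset.mul_sum, Finset.mul_sum]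
  apply Finset.sum_congr rfl
  intro i _
  rw [Real.sqrt_mul hP0.le, Real.sqrt_mul hP0.le]
  have : Real.sqrt P * Real.sqrt P = P := Real.mul_self_sqrt hP0.le
  calc P * (Real.sqrt (∑ᶠ k : Fin d → ℤ, v k ^ 2) *
        Real.sqrt (∑ᶠ k : Fin d → ℤ, (u (k + Pi.single i 1) - u k) ^ 2))
      = (Real.sqrt P * Real.sqrt P) * (Real.sqrt (∑ᶠ k : Fin d → ℤ, v k ^ 2) *
        Real.sqrt (∑ᶠ k : Fin d → ℤ, (u (k + Pi.single i 1) - u k) ^ 2)) := by rw [this]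
    _ = Real.sqrt P * Real.sqrt (∑ᶠ k : Fin d → ℤ, v k ^ 2) *
        (Real.sqrt P * Real.sqrt (∑ᶠ k : Fin d → ℤ, (u (k + Pi.single i 1) - u k) ^ 2)) := by
        ring


theorem stmt14 (d : ℕ) (hd : 1 ≤ d) (r : Fin d → ℕ) (hr : ∀ i, 0 < r i)
    (hstep : ℕ → Fin d → ℝ)
    (hstepdef : ∀ n i, hstep n i = (r i : ℝ) * ((2 : ℝ) ^ n)⁻¹)
    (H : ℕ → ℝ) (hH : ∀ n, H n = ∏ i : Fin d, hstep n i)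
    (u v : ℕ → (Fin d → ℤ) → ℝ)
    (hufin : ∀ n, (Function.support (u n)).Finite)
    (hvfin : ∀ n, (Function.support (v n)).Finite)
    (c : ℝ) (hc : 0 < c)
    (hub : ∀ n, H n * ∑ᶠ k : Fin d → ℤ, (u n k) ^ 2 ≤ c)
    (hvb : ∀ n, H n * ∑ᶠ k : Fin d → ℤ, (v n k) ^ 2 ≤ c)
    (hshift : ∀ i : Fin d,
      Tendsto (fun n => H n * ∑ᶠ k : Fin d → ℤ,
          (u n (k + Pi.single i 1) - u n k) ^ 2) atTop (nhds 0)) :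
    Tendsto (fun n =>
        (∫ x : Fin d → ℝ,
            (∑ᶠ k : Fin d → ℤ, v n k * ∏ i : Fin d, chi (x i / hstep n i - (k i : ℝ))) *
            (∑ᶠ k : Fin d → ℤ, u n k * ∏ i : Fin d, chi (x i / hstep n i - (k i : ℝ))))
          - H n * ∑ᶠ k : Fin d → ℤ, v n k * u n k)
      atTop (nhds 0) := by
  have hpos : ∀ n i, 0 < hstep n i := by
    intro n i
    rw [hstepdef n i]
    have h1 : (0:ℝ) < r i := by exact_mod_cast hr i
    positivity
  apply squeeze_zero_norm (a := fun n => ∑ i : Fin d, Real.sqrt c *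
      Real.sqrt (H n * ∑ᶠ k : Fin d → ℤ, (u n (k + Pi.single i 1) - u n k) ^ 2))
  · intro n
    rw [Real.norm_eq_abs]
    have hb := main_bound (hstep n) (hpos n) (u n) (v n) (hufin n) (hvfin n)
    rw [← hH n] at hb
    refine hb.trans ?_
    apply Finset.sum_le_sum
    intro i _
    apply mul_le_mul_of_nonneg_right _ (Real.sqrt_nonneg _)
    apply Real.sqrt_le_sqrt
    exact hvb n
  · rw [show (0:ℝ) = ∑ _i : Fin d, (0:ℝ) by simp]
    apply tendsto_finset_sum
    intro i _
    have h1 : Tendsto (fun n => Real.sqrt (H n * ∑ᶠ k : Fin d → ℤ,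
        (u n (k + Pi.single i 1) - u n k) ^ 2)) atTop (nhds 0) := by
      have := (Real.continuous_sqrt.tendsto' 0 0 Real.sqrt_zero).comp (hshift i)
      exact this
    simpa using h1.const_mul (Real.sqrt c)
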